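/- Let a1, c, mu0, mu1 > 0, b ∈ ℝ, and 0 < σ < 2c/a1. Set E = 4·a1³·mu1⁴·σ − 4·a1²·b·mu1³·σ − a1²·mu0²·mu1² − 4·a1²·mu0·mu1²·σ + 8·a1²·mu1²·σ + 2·a1·b·mu0·mu1 − 4·a1·b·mu1·σ − 4·a1·mu0·σ + 4·a1·σ − b², and assume E·(a1·σ − c) > 0. Define B = (a1·mu0·mu1 − b)/(2·a1·σ·(a1·mu1² + 1)), ω = −((a1·mu1²·σ − b·mu1 − mu0 + σ)·mu1)/(a1·mu1² + 1), λ = √(E/(16·a1·σ·(a1·mu1² + 1)²·(a1·σ − c))), d2 = 3·√(2c − a1·σ)·E/(8·√(a1·σ)·(a1·mu1² + 1)²·(a1·σ − c)), h2 = 3·E/(8·(a1·mu1² + 1)²·(a1·σ − c)), and h0 = −(−8·a1⁴·mu1⁴·σ³ + 8·a1⁴·mu1⁴·σ² + 8·a1³·c·mu1⁴·σ² − 16·a1³·mu1²·σ³ − 8·a1²·b·c·mu1³·σ + 16·a1³·mu1²·σ² − 2·a1²·c·mu0²·mu1² − 8·a1²·c·mu0·mu1²·σ + 16·a1²·c·mu1²·σ²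 − 8·a1²·σ³ + 4·a1·b·c·mu0·mu1 − 8·a1·b·c·mu1·σ + 8·a1²·σ² − 8·a1·c·mu0·σ + 8·a1·c·σ² − 2·b²·c)/(8·a1·σ·(a1·mu1² + 1)²·(a1·σ − c)). Then f(ξ) = d2·sech²(λ·ξ) and g(ξ) = h0 + h2·sech²(λ·ξ) satisfy the Schrödinger BBM–KdV associated ODE system with parameters a1, c, mu0, mu1, b, wave speed σ, and phase shifts B, ω. -/

import Mathlib

private lemma my_cosh_ne (x : ℝ) : Real.cosh x ≠ 0 := (Real.cosh_pos x).ne'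

private lemma my_d1 (l x : ℝ) :
    HasDerivAt (fun y => (1/Real.cosh (l*y))^2)
      (-2*l*Real.sinh (l*x)/Real.cosh (l*x)^3) x := by
  have hl : HasDerivAt (fun y : ℝ => l*y) l x := by
    simpa using (hasDerivAt_id x).const_mul l
  have hcosh : HasDerivAt (fun y => Real.cosh (l*y)) (Real.sinh (l*x) * l) x :=
    (Real.hasDerivAt_cosh (l*x)).comp x hl
  have h := (hcosh.inv (my_cosh_ne _)).pow 2
  have heq : (fun y => (1/Real.cosh (l*y))^2) = (fun y => ((Real.cosh (l*y))⁻¹)^2) := by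
    funext y; rw [one_div]
  rw [heq]
  refine h.congr_deriv ?_
  have hc := my_cosh_ne (l*x)
  simp only [Pi.inv_apply]; norm_num; field_simp

private lemma my_d2 (l x : ℝ) :
    HasDerivAt (fun y => -2*l*Real.sinh (l*y)/Real.cosh (l*y)^3)
      (4*l^2*(1/Real.cosh (l*x))^2 - 6*l^2*(1/Real.cosh (l*x))^4) x := by
  have hl : HasDerivAt (fun y : ℝ => l*y) l x := by
    simpa using (hasDerivAt_id x).const_mul l
  have hcosh : HasDerivAt (fun y => Real.cosh (l*y)) (Real.sinh (l*x) * l) x :=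
    (Real.hasDerivAt_cosh (l*x)).comp x hl
  have hsinh : HasDerivAt (fun y => Real.sinh (l*y)) (Real.cosh (l*x) * l) x :=
    (Real.hasDerivAt_sinh (l*x)).comp x hl
  have h := ((hsinh.div (hcosh.pow 3) (pow_ne_zero 3 (my_cosh_ne _)))).const_mul (-2*l)
  have heq : (fun y => -2*l*Real.sinh (l*y)/Real.cosh (l*y)^3)
      = (fun y => (-2*l) * (Real.sinh (l*y)/Real.cosh (l*y)^3)) := by
    funext y; ring
  rw [heq]
  refine h.congr_deriv ?_
  have hc := my_cosh_ne (l*x)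
  have hs := Real.sinh_sq (l*x)
  simp only [Pi.pow_apply]; norm_num; field_simp
  linear_combination (6*l^2) * hs

private lemma my_d3 (l x : ℝ) :
    HasDerivAt (fun y => 4*l^2*(1/Real.cosh (l*y))^2 - 6*l^2*(1/Real.cosh (l*y))^4)
      (-8*l^3*Real.sinh (l*x)/Real.cosh (l*x)^3
        + 24*l^3*Real.sinh (l*x)/Real.cosh (l*x)^5) x := by
  have h1 := my_d1 l x
  have h4 := (my_d1 l x).pow 2
  have heq4 : (fun y => ((1/Real.cosh (l*y))^2)^2) = (fun y => (1/Real.cosh (l*y))^4) := by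
    funext y; ring
  change HasDerivAt (fun y => ((1/Real.cosh (l*y))^2)^2) _ x at h4; rw [heq4] at h4
  have h := (h1.const_mul (4*l^2)).sub (h4.const_mul (6*l^2))
  refine h.congr_deriv ?_
  have hc := my_cosh_ne (l*x)
  norm_num; field_simp
  ring

set_option maxHeartbeats 2000000 in
theorem stmt_10
    (a1 c mu0 mu1 b : ℝ)
    (ha1 : 0 < a1) (hc : 0 < c) (hmu0 : 0 < mu0) (hmu1 : 0 < mu1)
    (σ : ℝ) (hσ : 0 < σ) (hσlt : σ < 2*c/a1)
    (E : ℝ) (hE : E = 4*a1^3*mu1^4*σ - 4*a1^2*b*mu1^3*σ - a1^2*mu0^2*mu1^2 - 4*a1^2*mu0*mu1^2*σ + 8*a1^2*mu1^2*σ + 2*a1*b*mu0*mu1 - 4*a1*b*mu1*σ - 4*a1*mu0*σ + 4*a1*σ - b^2) (hEsgn : E * (a1*σ - c) > 0)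
    (B ω lam d2 h2 h0 : ℝ)
    (h_B : B = (a1*mu0*mu1 - b)/(2*a1*σ*(a1*mu1^2 + 1)))
    (h_ω : ω = -((a1*mu1^2*σ - b*mu1 - mu0 + σ)*mu1)/(a1*mu1^2 + 1))
    (h_lam : lam = Real.sqrt (E/(16*a1*σ*(a1*mu1^2 + 1)^2*(a1*σ - c))))
    (h_d2 : d2 = 3*Real.sqrt (2*c - a1*σ)*E/(8*Real.sqrt (a1*σ)*(a1*mu1^2 + 1)^2*(a1*σ - c)))
    (h_h2 : h2 = 3*E/(8*(a1*mu1^2 + 1)^2*(a1*σ - c)))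
    (h_h0 : h0 = -(-8*a1^4*mu1^4*σ^3 + 8*a1^4*mu1^4*σ^2 + 8*a1^3*c*mu1^4*σ^2 - 16*a1^3*mu1^2*σ^3 - 8*a1^2*b*c*mu1^3*σ + 16*a1^3*mu1^2*σ^2 - 2*a1^2*c*mu0^2*mu1^2 - 8*a1^2*c*mu0*mu1^2*σ + 16*a1^2*c*mu1^2*σ^2 - 8*a1^2*σ^3 + 4*a1*b*c*mu0*mu1 - 8*a1*b*c*mu1*σ + 8*a1^2*σ^2 - 8*a1*c*mu0*σ + 8*a1*c*σ^2 - 2*b^2*c)/(8*a1*σ*(a1*mu1^2 + 1)^2*(a1*σ - c)))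
    (f g : ℝ → ℝ)
    (hfdef : ∀ ξ : ℝ, f ξ = d2 * (1/Real.cosh (lam*ξ))^2)
    (hgdef : ∀ ξ : ℝ, g ξ = h0 + h2 * (1/Real.cosh (lam*ξ))^2) :
    ∀ ξ : ℝ,
      (deriv f ξ * g ξ + f ξ * deriv g ξ + a1*σ * iteratedDeriv 3 f ξ + (mu0 + 2*a1*B*ω - 3*a1*B^2*σ - σ - 2*b*B) * deriv f ξ = 0) ∧
      ((B + mu1) * f ξ * g ξ + (3*a1*B*σ + b - a1*ω) * iteratedDeriv 2 f ξ + (ω + B*mu0 + a1*B^2*ω - a1*B^3*σ - B*σ - b*B^2) * f ξ = 0) ∧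
      (f ξ * deriv f ξ + g ξ * deriv g ξ + c * iteratedDeriv 3 g ξ + (1 - σ) * deriv g ξ = 0) := by
  -- basic nonvanishing facts
  have hane : a1 ≠ 0 := ha1.ne'
  have hσne : σ ≠ 0 := hσ.ne'
  have hKpos : (0:ℝ) < a1*mu1^2 + 1 := by positivity
  have hKne : a1*mu1^2 + 1 ≠ 0 := hKpos.ne'
  have hacne : a1*σ - c ≠ 0 := by
    intro h0; rw [h0, mul_zero] at hEsgn; exact lt_irrefl 0 hEsgn
  have hacsq : (0:ℝ) < (a1*σ - c)^2 :=
    lt_of_le_of_ne (sq_nonneg _) (Ne.symm (pow_ne_zero 2 hacne))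
  have h2c : a1*σ < 2*c := by
    rw [lt_div_iff₀ ha1] at hσlt; linarith
  -- lam^2
  have hargpos : 0 < E/(16*a1*σ*(a1*mu1^2 + 1)^2*(a1*σ - c)) := by
    have heq : E/(16*a1*σ*(a1*mu1^2 + 1)^2*(a1*σ - c))
        = (E*(a1*σ-c))/(16*a1*σ*(a1*mu1^2 + 1)^2*(a1*σ - c)^2) := by
      field_simp
    rw [heq]
    apply div_pos hEsgn
    positivity
  have hlam2 : lam^2 = E/(16*a1*σ*(a1*mu1^2 + 1)^2*(a1*σ - c)) := by
    rw [h_lam, Real.sq_sqrt hargpos.le]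
  -- d2^2
  have hd2sq : d2^2 = 9*(2*c - a1*σ)*E^2/(64*(a1*σ)*(a1*mu1^2 + 1)^4*(a1*σ - c)^2) := by
    rw [h_d2, div_pow,
      show (3*Real.sqrt (2*c - a1*σ)*E)^2 = 9*(Real.sqrt (2*c - a1*σ)^2)*E^2 by ring,
      show (8*Real.sqrt (a1*σ)*(a1*mu1^2 + 1)^2*(a1*σ - c))^2
        = 64*(Real.sqrt (a1*σ)^2)*(a1*mu1^2 + 1)^4*(a1*σ - c)^2 by ring,
      Real.sq_sqrt (by linarith : (0:ℝ) ≤ 2*c - a1*σ),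
      Real.sq_sqrt (by positivity : (0:ℝ) ≤ a1*σ)]
  -- key scalar identities
  have A1 : h0 + (mu0 + 2*a1*B*ω - 3*a1*B^2*σ - σ - 2*b*B) + 4*(a1*σ)*lam^2 = 0 := by
    rw [hlam2, h_h0, h_B, h_ω, hE]; field_simp; ring
  have A2 : h2 - 6*(a1*σ)*lam^2 = 0 := by
    rw [hlam2, h_h2]; field_simp; ring
  have B1 : (B + mu1)*h0 + 4*lam^2*(3*a1*B*σ + b - a1*ω)
      + (ω + B*mu0 + a1*B^2*ω - a1*B^3*σ - B*σ - b*B^2) = 0 := by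
    rw [hlam2, h_h0, h_B, h_ω, hE]; field_simp; ring
  have B2 : (B + mu1)*h2 - 6*lam^2*(3*a1*B*σ + b - a1*ω) = 0 := by
    rw [hlam2, h_h2, h_B, h_ω, hE]; field_simp; ring
  have C1 : d2^2 + h2^2 - 12*c*lam^2*h2 = 0 := by
    rw [hd2sq, h_h2, hlam2, hE]; field_simp; ring
  have C2 : h0 + 4*c*lam^2 + 1 - σ = 0 := by
    rw [hlam2, h_h0, hE]; field_simp; ring
  -- derivatives of f
  have hfun : f = fun y => d2 * (1/Real.cosh (lam*y))^2 := funext hfdef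
  have hgfun : g = fun y => h0 + h2 * (1/Real.cosh (lam*y))^2 := funext hgdef
  have hf' : deriv f = fun x => d2 * (-2*lam*Real.sinh (lam*x)/Real.cosh (lam*x)^3) := by
    funext x; rw [hfun]; exact ((my_d1 lam x).const_mul d2).deriv
  have hf'' : iteratedDeriv 2 f
      = fun x => d2 * (4*lam^2*(1/Real.cosh (lam*x))^2 - 6*lam^2*(1/Real.cosh (lam*x))^4) := by
    rw [iteratedDeriv_succ, iteratedDeriv_one, hf']
    funext x; exact ((my_d2 lam x).const_mul d2).deriv
  have hf''' : iteratedDeriv 3 f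
      = fun x => d2 * (-8*lam^3*Real.sinh (lam*x)/Real.cosh (lam*x)^3
          + 24*lam^3*Real.sinh (lam*x)/Real.cosh (lam*x)^5) := by
    rw [show (3:ℕ) = 2+1 from rfl, iteratedDeriv_succ, hf'']
    funext x; exact ((my_d3 lam x).const_mul d2).deriv
  -- derivatives of g
  have hg' : deriv g = fun x => h2 * (-2*lam*Real.sinh (lam*x)/Real.cosh (lam*x)^3) := by
    funext x; rw [hgfun]
    exact (((my_d1 lam x).const_mul h2).const_add h0).deriv
  have hg'' : iteratedDeriv 2 g
      = fun x => h2 * (4*lam^2*(1/Real.cosh (lam*x))^2 - 6*lam^2*(1/Real.cosh (lam*x))^4) := by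
    rw [iteratedDeriv_succ, iteratedDeriv_one, hg']
    funext x; exact ((my_d2 lam x).const_mul h2).deriv
  have hg''' : iteratedDeriv 3 g
      = fun x => h2 * (-8*lam^3*Real.sinh (lam*x)/Real.cosh (lam*x)^3
          + 24*lam^3*Real.sinh (lam*x)/Real.cosh (lam*x)^5) := by
    rw [show (3:ℕ) = 2+1 from rfl, iteratedDeriv_succ, hg'']
    funext x; exact ((my_d3 lam x).const_mul h2).deriv
  intro ξ
  have e1 : deriv f ξ = d2 * (-2*lam*Real.sinh (lam*ξ)/Real.cosh (lam*ξ)^3) := by rw [hf']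
  have e2 : iteratedDeriv 2 f ξ
      = d2 * (4*lam^2*(1/Real.cosh (lam*ξ))^2 - 6*lam^2*(1/Real.cosh (lam*ξ))^4) := by rw [hf'']
  have e3 : iteratedDeriv 3 f ξ
      = d2 * (-8*lam^3*Real.sinh (lam*ξ)/Real.cosh (lam*ξ)^3
          + 24*lam^3*Real.sinh (lam*ξ)/Real.cosh (lam*ξ)^5) := by rw [hf''']
  have e4 : deriv g ξ = h2 * (-2*lam*Real.sinh (lam*ξ)/Real.cosh (lam*ξ)^3) := by rw [hg']
  have e5 : iteratedDeriv 3 g ξ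
      = h2 * (-8*lam^3*Real.sinh (lam*ξ)/Real.cosh (lam*ξ)^3
          + 24*lam^3*Real.sinh (lam*ξ)/Real.cosh (lam*ξ)^5) := by rw [hg''']
  refine ⟨?_, ?_, ?_⟩
  · rw [e1, e3, hfdef ξ, hgdef ξ, e4]
    linear_combination (-2*lam*d2*(Real.sinh (lam*ξ)/Real.cosh (lam*ξ)^3)) * A1
      + (-4*lam*d2*(Real.sinh (lam*ξ)/Real.cosh (lam*ξ)^5)) * A2
  · rw [e2, hfdef ξ, hgdef ξ]
    linear_combination (d2*(1/Real.cosh (lam*ξ))^2) * B1 + (d2*(1/Real.cosh (lam*ξ))^4) * B2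
  · rw [e1, e4, e5, hfdef ξ, hgdef ξ]
    linear_combination (-2*lam*h2*(Real.sinh (lam*ξ)/Real.cosh (lam*ξ)^3)) * C2
      + (-2*lam*(Real.sinh (lam*ξ)/Real.cosh (lam*ξ)^5)) * C1
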